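/- Let p ∈ (0,1) and let f : {0,1}^n → {0,1} be a monotone increasing Boolean function (i.e., x_i ≤ y_i for all i implies f(x) ≤ f(y)). Then p·I^p[f] ≥ μ_p(f)·log_p(μ_p(f)). -/

import Mathlib

open Finset

/-- The `p`-biased weight of a point of the discrete cube. -/
noncomputable def biasedWeight (p : ℝ) {n : ℕ} (x : Fin n → Bool) : ℝ :=
  ∏ i, if x i then p else 1 - p

/-- The `p`-biased measure (expectation) of a Boolean function. -/
noncomputable def biasedMeasure (p : ℝ) {n : ℕ} (f : (Fin n → Bool) → Bool) : ℝ :=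
  ∑ x : Fin n → Bool, biasedWeight p x * (if f x then 1 else 0)

/-- The `p`-biased influence of coordinate `i` on a Boolean function. -/
noncomputable def influence (p : ℝ) {n : ℕ} (f : (Fin n → Bool) → Bool) (i : Fin n) : ℝ :=
  ∑ x : Fin n → Bool,
    biasedWeight p x * (if f x ≠ f (Function.update x i (!x i)) then 1 else 0)

/-- The total `p`-biased influence of a Boolean function. -/
noncomputable def totalInfluence (p : ℝ) {n : ℕ} (f : (Fin n → Bool) → Bool) : ℝ :=
  ∑ i, influence p f i

lemma sum_cons {n : ℕ} (g : (Fin (n+1) → Bool) → ℝ) :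
    ∑ y : Fin (n+1) → Bool, g y =
      ∑ x : Fin n → Bool, (g (Fin.cons false x) + g (Fin.cons true x)) := by
  rw [← (Fin.consEquiv (fun _ => Bool)).sum_comp g]
  rw [Fintype.sum_prod_type_right]
  congr 1
  ext x
  simp [Fintype.sum_bool, Fin.consEquiv, add_comm]

lemma weight_cons (p : ℝ) {n : ℕ} (b : Bool) (x : Fin n → Bool) :
    biasedWeight p (Fin.cons b x) = (if b then p else 1-p) * biasedWeight p x := by
  unfold biasedWeight
  rw [Fin.prod_univ_succ]
  simp

lemma measure_cons (p : ℝ) {n : ℕ} (f : (Fin (n+1) → Bool) → Bool) :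
    biasedMeasure p f = (1-p) * biasedMeasure p (fun x => f (Fin.cons false x))
      + p * biasedMeasure p (fun x => f (Fin.cons true x)) := by
  unfold biasedMeasure
  rw [sum_cons, Finset.mul_sum, Finset.mul_sum, ← Finset.sum_add_distrib]
  congr 1; ext x
  rw [weight_cons, weight_cons]
  simp
  try ring

lemma influence_zero (p : ℝ) {n : ℕ} (f : (Fin (n+1) → Bool) → Bool) :
    influence p f 0 = ∑ x : Fin n → Bool, biasedWeight p x *
      (if f (Fin.cons false x) ≠ f (Fin.cons true x) then 1 else 0) := by
  unfold influence
  rw [sum_cons]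
  congr 1; ext x
  rw [weight_cons, weight_cons]
  have hup : ∀ (b c : Bool), Function.update (Fin.cons b x) (0 : Fin (n+1)) c =
      (Fin.cons c x : Fin (n+1) → Bool) := by
    intro b c; funext j
    refine Fin.cases ?_ (fun k => ?_) j
    · simp [Function.update]
    · simp [Function.update, Fin.succ_ne_zero]
  simp only [Fin.cons_zero, Bool.not_false, Bool.not_true]
  rw [hup false true, hup true false]
  by_cases h : f (Fin.cons false x) = f (Fin.cons true x)
  · simp [h]
  · simp only [ne_eq, h, not_false_eq_true, if_true, Ne.symm h]
    simp
    ring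

lemma influence_succ (p : ℝ) {n : ℕ} (f : (Fin (n+1) → Bool) → Bool) (i : Fin n) :
    influence p f i.succ = (1-p) * influence p (fun x => f (Fin.cons false x)) i
      + p * influence p (fun x => f (Fin.cons true x)) i := by
  unfold influence
  rw [sum_cons, Finset.mul_sum, Finset.mul_sum, ← Finset.sum_add_distrib]
  congr 1; ext x
  rw [weight_cons, weight_cons]
  simp only [Fin.cons_succ]
  have h1 : ∀ b : Bool, Function.update (Fin.cons b x) i.succ (!(x i)) =
      (Fin.cons b (Function.update x i (!(x i))) : Fin (n+1) → Bool) := by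
    intro b; funext j
    refine Fin.cases ?_ (fun k => ?_) j
    · simp [Function.update, (Fin.succ_ne_zero i).symm]
    · simp only [Fin.cons_succ, Function.update]
      by_cases hk : k = i
      · subst hk; simp
      · simp [hk, Fin.succ_inj, Fin.cons_succ]
  rw [h1 false, h1 true]
  simp
  try ring

lemma totalInfluence_cons (p : ℝ) {n : ℕ} (f : (Fin (n+1) → Bool) → Bool) :
    totalInfluence p f = (1-p) * totalInfluence p (fun x => f (Fin.cons false x))
      + p * totalInfluence p (fun x => f (Fin.cons true x))
      + ∑ x : Fin n → Bool, biasedWeight p x *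
          (if f (Fin.cons false x) ≠ f (Fin.cons true x) then 1 else 0) := by
  unfold totalInfluence
  rw [Fin.sum_univ_succ, influence_zero]
  have : ∀ i : Fin n, influence p f i.succ =
      (1-p) * influence p (fun x => f (Fin.cons false x)) i
        + p * influence p (fun x => f (Fin.cons true x)) i := influence_succ p f
  rw [Finset.sum_congr rfl (fun i _ => this i), Finset.sum_add_distrib,
    ← Finset.mul_sum, ← Finset.mul_sum]
  ring


lemma key_concave (p b : ℝ) (hp : 0 < p) (hp1 : p < 1) (hb : 0 < b) :
    ConcaveOn ℝ (Set.Icc 0 b) (fun a : ℝ =>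
      ((1-p)*a + p*b) * Real.log ((1-p)*a + p*b) - (1-p)*(a * Real.log a)
        + (p*Real.log p)*a) := by
  have hD : Convex ℝ (Set.Icc (0:ℝ) b) := convex_Icc 0 b
  refine concaveOn_of_hasDerivWithinAt2_nonpos (f' := fun a =>
      (Real.log ((1-p)*a + p*b) + 1) * (1-p) - (1-p)*(Real.log a + 1) + p*Real.log p)
    (f'' := fun a => ((1-p)*a + p*b)⁻¹ * (1-p) * (1-p) - (1-p)*a⁻¹) hD ?_ ?_ ?_ ?_
  · apply Continuous.continuousOn
    have h1 : Continuous fun a : ℝ => ((1-p)*a + p*b) * Real.log ((1-p)*a + p*b) :=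
      Real.continuous_mul_log.comp (by continuity)
    exact (h1.sub (continuous_const.mul Real.continuous_mul_log)).add
      (continuous_const.mul continuous_id)
  · rw [interior_Icc]
    intro x hx
    obtain ⟨hx0, hxb⟩ := hx
    have hL : 0 < (1-p)*x + p*b := by nlinarith
    have h1 : HasDerivAt (fun a : ℝ => (1-p)*a + p*b) (1-p) x := by
      simpa using ((hasDerivAt_id x).const_mul (1-p)).add_const (p*b)
    have h2 : HasDerivAt (fun a : ℝ => ((1-p)*a + p*b) * Real.log ((1-p)*a + p*b))
        ((Real.log ((1-p)*x + p*b) + 1) * (1-p)) x :=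
      by have := (Real.hasDerivAt_mul_log hL.ne').comp x h1; exact this
    have h3 : HasDerivAt (fun a : ℝ => (1-p)*(a * Real.log a))
        ((1-p)*(Real.log x + 1)) x :=
      (Real.hasDerivAt_mul_log hx0.ne').const_mul (1-p)
    have h4 : HasDerivAt (fun a : ℝ => (p*Real.log p)*a) (p*Real.log p) x := by
      simpa using (hasDerivAt_id x).const_mul (p*Real.log p)
    exact ((h2.sub h3).add h4).hasDerivWithinAt
  · rw [interior_Icc]
    intro x hx
    obtain ⟨hx0, hxb⟩ := hx
    have hL : 0 < (1-p)*x + p*b := by nlinarith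
    have h1 : HasDerivAt (fun a : ℝ => (1-p)*a + p*b) (1-p) x := by
      simpa using ((hasDerivAt_id x).const_mul (1-p)).add_const (p*b)
    have h2 : HasDerivAt (fun a : ℝ => (Real.log ((1-p)*a + p*b) + 1) * (1-p))
        ((((1-p)*x + p*b)⁻¹ * (1-p)) * (1-p)) x :=
      (((Real.hasDerivAt_log hL.ne').comp x h1).add_const 1).mul_const (1-p)
    have h3 : HasDerivAt (fun a : ℝ => (1-p)*(Real.log a + 1)) ((1-p)*x⁻¹) x :=
      ((Real.hasDerivAt_log hx0.ne').add_const 1).const_mul (1-p)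
    exact ((h2.sub h3).add_const (p*Real.log p)).hasDerivWithinAt
  · rw [interior_Icc]
    intro x hx
    obtain ⟨hx0, hxb⟩ := hx
    have hL : 0 < (1-p)*x + p*b := by nlinarith
    have hmono : (1-p)*x ≤ (1-p)*x + p*b := by nlinarith
    have h1 : ((1-p)*x + p*b)⁻¹ ≤ ((1-p)*x)⁻¹ := by
      apply inv_anti₀ (by nlinarith) hmono
    have hpx : 0 < (1-p)*x := by nlinarith
    have : ((1-p)*x + p*b)⁻¹ * (1-p) * (1-p) ≤ ((1-p)*x)⁻¹ * (1-p) * (1-p) := by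
      apply mul_le_mul_of_nonneg_right (mul_le_mul_of_nonneg_right h1 (by linarith)) (by linarith)
    have h2 : ((1-p)*x)⁻¹ * (1-p) * (1-p) = (1-p) * x⁻¹ := by
      field_simp
    linarith [this, h2 ▸ this]

lemma key_ineq (p : ℝ) (hp : 0 < p) (hp1 : p < 1) {a b : ℝ} (ha : 0 ≤ a) (hab : a ≤ b) :
    (1-p)*(a*Real.log a) + p*(b*Real.log b) + p*(b-a)*Real.log p ≤
      ((1-p)*a + p*b) * Real.log ((1-p)*a + p*b) := by
  rcases eq_or_lt_of_le (ha.trans hab) with hb | hb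
  · have hb0 : b = 0 := hb.symm
    have ha0 : a = 0 := le_antisymm (hb0 ▸ hab) ha
    simp [ha0, hb0]
  · have hconc := key_concave p b hp hp1 hb
    have h0m : (0:ℝ) ∈ Set.Icc (0:ℝ) b := by constructor <;> [rfl; linarith]
    have hbm : b ∈ Set.Icc (0:ℝ) b := by constructor <;> [linarith; rfl]
    have hc1 : (0:ℝ) ≤ 1 - a/b := by
      have : a/b ≤ 1 := (div_le_one hb).mpr hab
      linarith
    have hc2 : (0:ℝ) ≤ a/b := div_nonneg ha hb.le
    have hsum : (1 - a/b) + a/b = 1 := by ring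
    have hcomb := hconc.2 h0m hbm hc1 hc2 hsum
    simp only [smul_eq_mul] at hcomb
    have hx : (1 - a/b) * 0 + (a/b) * b = a := by field_simp; ring
    rw [hx] at hcomb
    have hlogpb : Real.log (p*b) = Real.log p + Real.log b := Real.log_mul hp.ne' hb.ne'
    have e0 : ((1-p)*(0:ℝ) + p*b) * Real.log ((1-p)*0 + p*b) - (1-p)*((0:ℝ) * Real.log 0)
        + (p*Real.log p)*0 = p*b*Real.log p + p*b*Real.log b := by
      have : (1-p)*(0:ℝ) + p*b = p*b := by ring
      rw [this, hlogpb]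
      simp
      ring
    have e1 : ((1-p)*b + p*b) * Real.log ((1-p)*b + p*b) - (1-p)*(b * Real.log b)
        + (p*Real.log p)*b = p*(b*Real.log b) + p*b*Real.log p := by
      have : (1-p)*b + p*b = b := by ring
      rw [this]; ring
    rw [e0, e1] at hcomb
    nlinarith [hcomb]

lemma weight_nonneg {p : ℝ} (hp : 0 ≤ p) (hp1 : p ≤ 1) {n : ℕ} (x : Fin n → Bool) :
    0 ≤ biasedWeight p x :=
  Finset.prod_nonneg fun i _ => by split <;> linarith

lemma measure_nonneg {p : ℝ} (hp : 0 ≤ p) (hp1 : p ≤ 1) {n : ℕ} (f : (Fin n → Bool) → Bool) :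
    0 ≤ biasedMeasure p f :=
  Finset.sum_nonneg fun x _ => mul_nonneg (weight_nonneg hp hp1 x) (by split <;> norm_num)

lemma measure_mono {p : ℝ} (hp : 0 ≤ p) (hp1 : p ≤ 1) {n : ℕ}
    {f g : (Fin n → Bool) → Bool} (h : ∀ x, f x ≤ g x) :
    biasedMeasure p f ≤ biasedMeasure p g := by
  apply Finset.sum_le_sum
  intro x _
  apply mul_le_mul_of_nonneg_left _ (weight_nonneg hp hp1 x)
  have hfg := h x
  cases h0 : f x
  · rcases hg : g x <;> simp [hg]
  · rw [h0] at hfg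
    have hg : g x = true := le_antisymm (Bool.le_true _) hfg
    simp [h0, hg]

lemma sum_weight (p : ℝ) : ∀ n : ℕ, ∑ x : Fin n → Bool, biasedWeight p x = 1 := by
  intro n
  induction n with
  | zero =>
    rw [Fintype.sum_unique]
    simp [biasedWeight]
  | succ n ih =>
    rw [sum_cons]
    have : ∀ x : Fin n → Bool,
        biasedWeight p (Fin.cons false x) + biasedWeight p (Fin.cons true x) =
          biasedWeight p x := by
      intro x; rw [weight_cons, weight_cons]; simp; ring
    rw [Finset.sum_congr rfl fun x _ => this x, ih]

lemma measure_le_one {p : ℝ} (hp : 0 ≤ p) (hp1 : p ≤ 1) {n : ℕ} (f : (Fin n → Bool) → Bool) :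
    biasedMeasure p f ≤ 1 := by
  rw [← sum_weight p n]
  apply Finset.sum_le_sum
  intro x _
  have := weight_nonneg hp hp1 x
  split <;> nlinarith

lemma diff_sum {p : ℝ} {n : ℕ} {f g : (Fin n → Bool) → Bool} (h : ∀ x, f x ≤ g x) :
    ∑ x : Fin n → Bool, biasedWeight p x * (if f x ≠ g x then 1 else 0) =
      biasedMeasure p g - biasedMeasure p f := by
  unfold biasedMeasure
  rw [← Finset.sum_sub_distrib]
  apply Finset.sum_congr rfl
  intro x _
  have hfg := h x
  cases h0 : f x
  · cases h1 : g x <;> simp [h0, h1]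
  · rw [h0] at hfg
    have hg : g x = true := le_antisymm (Bool.le_true _) hfg
    simp [h0, hg]

theorem aux_ineq (p : ℝ) (hp : 0 < p) (hp1 : p < 1) :
    ∀ (n : ℕ) (f : (Fin n → Bool) → Bool),
      (∀ x y : Fin n → Bool, (∀ i, x i ≤ y i) → f x ≤ f y) →
      (p * totalInfluence p f) * Real.log p ≤
        biasedMeasure p f * Real.log (biasedMeasure p f) := by
  intro n
  induction n with
  | zero =>
    intro f _
    have hI : totalInfluence p f = 0 := by simp [totalInfluence]
    have hμ : biasedMeasure p f = if f default then 1 else 0 := by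
      unfold biasedMeasure
      rw [Fintype.sum_unique]
      simp [biasedWeight]
      exact congrArg (fun b : Bool => if b = true then (1:ℝ) else 0)
        (congrArg f (Subsingleton.elim _ _))
    rw [hI, hμ]
    rcases h : f default <;> simp
  | succ n ih =>
    intro f hmono
    set f0 : (Fin n → Bool) → Bool := fun x => f (Fin.cons false x) with hf0
    set f1 : (Fin n → Bool) → Bool := fun x => f (Fin.cons true x) with hf1
    have hm0 : ∀ x y : Fin n → Bool, (∀ i, x i ≤ y i) → f0 x ≤ f0 y := by
      intro x y hxy
      apply hmono
      intro i
      refine Fin.cases ?_ (fun j => ?_) i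
      · simp
      · simpa using hxy j
    have hm1 : ∀ x y : Fin n → Bool, (∀ i, x i ≤ y i) → f1 x ≤ f1 y := by
      intro x y hxy
      apply hmono
      intro i
      refine Fin.cases ?_ (fun j => ?_) i
      · simp
      · simpa using hxy j
    have hle : ∀ x, f0 x ≤ f1 x := by
      intro x
      apply hmono
      intro i
      refine Fin.cases ?_ (fun j => ?_) i
      · simp
      · simp
    have ih0 := ih f0 hm0
    have ih1 := ih f1 hm1
    set a := biasedMeasure p f0 with hadef
    set b := biasedMeasure p f1 with hbdef
    have ha : 0 ≤ a := measure_nonneg hp.le hp1.le f0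
    have hab : a ≤ b := measure_mono hp.le hp1.le hle
    have hkey := key_ineq p hp hp1 ha hab
    rw [measure_cons, totalInfluence_cons, diff_sum hle]
    have e1 : (1-p) * ((p * totalInfluence p f0) * Real.log p) ≤ (1-p) * (a * Real.log a) :=
      mul_le_mul_of_nonneg_left ih0 (by linarith)
    have e2 : p * ((p * totalInfluence p f1) * Real.log p) ≤ p * (b * Real.log b) :=
      mul_le_mul_of_nonneg_left ih1 hp.le
    nlinarith [hkey, e1, e2]
theorem biased_edge_isoperimetric_inequality_monotone (p : ℝ) (hp : 0 < p) (hp1 : p < 1)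
    (n : ℕ) (f : (Fin n → Bool) → Bool)
    (hmono : ∀ x y : Fin n → Bool, (∀ i, x i ≤ y i) → f x ≤ f y) :
    p * totalInfluence p f ≥
      biasedMeasure p f * (Real.log (biasedMeasure p f) / Real.log p) := by
  have hlogp : Real.log p < 0 := Real.log_neg hp hp1
  rw [ge_iff_le, mul_div_assoc', div_le_iff_of_neg hlogp]
  exact aux_ineq p hp hp1 n f hmono
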